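/- There exists a constant M₃ > 0 such that for every integer n ≥ 2 and every polynomial p ∈ P_n with p(1) = p(−1) = 0, the polynomial p is divisible by 1−u², the quotient p/(1−u²) lies in P_{n−2}, and ‖p/(1−u²)‖_{n−2} ≤ M₃·‖p‖_n. -/

import Mathlib

open Polynomial Classical

/-- The operator `D` on polynomials: `(Dp)(u) = (1 - u²)·p′(u)`. -/
noncomputable def Dop (p : Polynomial ℂ) : Polynomial ℂ := (1 - X ^ 2) * derivative p

/-- The polynomials τ_n: τ₀ = 1, τ₁ = X, τ_{n+1} = (1/n)·D τ_n for n ≥ 1. -/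
noncomputable def tau : ℕ → Polynomial ℂ
  | 0 => 1
  | 1 => X
  | n + 2 => (((n + 1 : ℕ) : ℂ))⁻¹ • Dop (tau (n + 1))

/-- The norm `‖p‖_n` of a polynomial `p ∈ P_n`: writing `p = Σ_{k=0}^n a_k τ_k`
(the `τ_k` form a basis of `P_n`, so the `a_k` are unique), set
`‖p‖_n = Σ_{k=0}^n |a_k|·(π/2)^{n-k}`. -/
noncomputable def tauNorm (n : ℕ) (p : Polynomial ℂ) : ℝ :=
  if h : ∃ a : ℕ → ℂ, p = ∑ k ∈ Finset.range (n + 1), a k • tau k then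
    ∑ k ∈ Finset.range (n + 1), ‖h.choose k‖ * (Real.pi / 2) ^ (n - k)
  else 0

/-- Sequence d_r = -2^(2r+1)/(2r+2)!. -/
noncomputable def dd : ℕ → ℝ
  | 0 => -1
  | r + 1 => (4 / ((2 * r + 3) * (2 * r + 4))) * dd r

noncomputable def gg (r : ℕ) : ℝ := -((r : ℝ) + 1) * dd r

/-- Coefficient of τ_j in σ_k = τ_k/(1-X²). -/
noncomputable def Sc (k j : ℕ) : ℝ :=
  if j + 2 ≤ k ∧ (k - j) % 2 = 0 then
    (if j = 0 then gg ((k - 2) / 2) else dd ((k - 2 - j) / 2)) else 0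

/-- Coefficient of τ_j in X·σ_k. -/
noncomputable def Mc (k j : ℕ) : ℝ :=
  if j + 1 ≤ k ∧ (k - j) % 2 = 1 then
    (if j = 0 then dd ((k - 3) / 2) else gg ((k - 1 - j) / 2)) else 0

lemma dd_neg : ∀ r, dd r < 0 := by
  intro r
  induction r with
  | zero => norm_num [dd]
  | succ n ih =>
    have h4 : (0:ℝ) < 4 / ((2 * n + 3) * (2 * n + 4)) := by positivity
    calc dd (n+1) = (4 / ((2 * n + 3) * (2 * n + 4))) * dd n := rfl
    _ < 0 := mul_neg_of_pos_of_neg h4 ih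

lemma gg_pos (r : ℕ) : 0 < gg r := by
  have := dd_neg r
  unfold gg
  nlinarith [Nat.cast_nonneg (α := ℝ) r]

/-- The one nontrivial recurrence identity. -/
lemma dd_rec (r : ℕ) : (2 * (r:ℝ) + 3) * gg (r + 1) = -2 * dd r := by
  have h : dd (r + 1) = (4 / ((2 * r + 3) * (2 * r + 4))) * dd r := rfl
  unfold gg
  rw [h]
  have h3 : (2 * (r:ℝ) + 3) ≠ 0 := by positivity
  have h4 : (2 * (r:ℝ) + 4) ≠ 0 := by positivity
  push_cast
  field_simp
  ring

lemma gg_zero : gg 0 = 1 := by norm_num [gg, dd]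

lemma Sc_zero_of_le {k t : ℕ} (h : k ≤ t + 1) : Sc k t = 0 := by
  unfold Sc
  rw [if_neg]
  rintro ⟨h1, -⟩; omega


lemma Sc_eval_pos {k j : ℕ} (h1 : j + 2 ≤ k) (h2 : (k - j) % 2 = 0) (h3 : j ≠ 0) :
    Sc k j = dd ((k - 2 - j) / 2) := by
  unfold Sc; rw [if_pos ⟨h1, h2⟩, if_neg h3]

lemma Sc_eval_zero {k : ℕ} (h1 : 2 ≤ k) (h2 : k % 2 = 0) :
    Sc k 0 = gg ((k - 2) / 2) := by
  unfold Sc; rw [if_pos ⟨by omega, by omega⟩, if_pos rfl]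

lemma Sc_eval_none {k j : ℕ} (h : ¬ (j + 2 ≤ k ∧ (k - j) % 2 = 0)) : Sc k j = 0 := by
  unfold Sc; rw [if_neg h]

lemma Mc_eval_pos {k j : ℕ} (h1 : j + 1 ≤ k) (h2 : (k - j) % 2 = 1) (h3 : j ≠ 0) :
    Mc k j = gg ((k - 1 - j) / 2) := by
  unfold Mc; rw [if_pos ⟨h1, h2⟩, if_neg h3]

lemma Mc_eval_zero {k : ℕ} (h1 : 1 ≤ k) (h2 : k % 2 = 1) :
    Mc k 0 = dd ((k - 3) / 2) := by
  unfold Mc; rw [if_pos ⟨by omega, by omega⟩, if_pos rfl]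

lemma Mc_eval_none {k j : ℕ} (h : ¬ (j + 1 ≤ k ∧ (k - j) % 2 = 1)) : Mc k j = 0 := by
  unfold Mc; rw [if_neg h]

lemma key1 (k t : ℕ) (hk : 2 ≤ k) (ht : t < k) :
    (k : ℝ) * Sc (k + 1) t = (↑(t - 1) * Sc k (t - 1)) - 2 * Mc k t := by
  by_cases hpar : (k - t) % 2 = 1
  · rcases Nat.eq_zero_or_pos t with rfl | htpos
    · -- t = 0, k odd ≥ 3, k = 2r+3
      obtain ⟨r, rfl⟩ : ∃ r, k = 2 * r + 3 := ⟨(k - 3) / 2, by omega⟩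
      have hA : Sc (2*r+3+1) 0 = gg (r+1) := by
        rw [Sc_eval_zero (by omega) (by omega)]; congr 1; omega
      have hC : Mc (2*r+3) 0 = dd r := by
        rw [Mc_eval_zero (by omega) (by omega)]; congr 1; omega
      rw [hA, hC]
      have := dd_rec r
      push_cast
      norm_num
      linarith
    · obtain ⟨r, rfl⟩ : ∃ r, k = t + 2 * r + 1 := ⟨(k - t - 1) / 2, by omega⟩
      have hA : Sc (t + 2*r+1+1) t = dd r := by
        rw [Sc_eval_pos (by omega) (by omega) (by omega)]; congr 1; omega
      have hC : Mc (t + 2*r+1) t = gg r := by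
        rw [Mc_eval_pos (by omega) (by omega) (by omega)]; congr 1; omega
      rw [hA, hC]
      rcases Nat.eq_zero_or_pos (t - 1) with h1 | h1
      · have ht1 : t = 1 := by omega
        subst ht1
        simp only [show (1:ℕ) - 1 = 0 from rfl, Nat.cast_zero, zero_mul, gg]
        push_cast; ring
      · have hB : Sc (t + 2*r+1) (t-1) = dd r := by
          rw [Sc_eval_pos (by omega) (by omega) (by omega)]; congr 1; omega
        rw [hB]
        have hc2 : ((t - 1 : ℕ) : ℝ) = (t : ℝ) - 1 := by
          push_cast [Nat.cast_sub (by omega : 1 ≤ t)]; ring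
        rw [hc2]
        unfold gg
        push_cast; ring
  · have hA : Sc (k+1) t = 0 := Sc_eval_none (by omega)
    have hC : Mc k t = 0 := Mc_eval_none (by omega)
    rcases Nat.eq_zero_or_pos t with rfl | htpos
    · simp [hA, hC]
    · have hB : Sc k (t-1) = 0 := Sc_eval_none (by omega)
      simp [hA, hB, hC]

lemma key2 (k t : ℕ) (hk : 2 ≤ k) (ht : t < k + 1) :
    (k : ℝ) * Mc (k + 1) t =
      (↑(t - 1) * Mc k (t - 1)) + (if t = k then 1 else 0) - 2 * Sc k t := by
  by_cases hpar : (k - t) % 2 = 0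
  · rcases Nat.eq_zero_or_pos t with rfl | htpos
    · -- t = 0, k = 2r+2
      obtain ⟨r, rfl⟩ : ∃ r, k = 2 * r + 2 := ⟨(k - 2) / 2, by omega⟩
      have hA : Mc (2*r+2+1) 0 = dd r := by
        rw [Mc_eval_zero (by omega) (by omega)]; congr 1; omega
      have hB : Sc (2*r+2) 0 = gg r := by
        rw [Sc_eval_zero (by omega) (by omega)]; congr 1; omega
      rw [hA, hB, if_neg (by omega : ¬ (0:ℕ) = 2*r+2)]
      unfold gg
      push_cast; ring
    · rcases eq_or_ne t k with rfl | htk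
      · -- top
        have hA : Mc (t+1) t = gg 0 := by
          rw [Mc_eval_pos (by omega) (by omega) (by omega)]; congr 1; omega
        have hB : Mc t (t-1) = gg 0 := by
          rw [Mc_eval_pos (by omega) (by omega) (by omega)]; congr 1; omega
        have hC : Sc t t = 0 := Sc_eval_none (by omega)
        rw [hA, hB, hC, if_pos rfl, gg_zero]
        have hc2 : ((t - 1 : ℕ) : ℝ) = (t : ℝ) - 1 := by
          push_cast [Nat.cast_sub (by omega : 1 ≤ t)]; ring
        rw [hc2]; ring
      · obtain ⟨s, rfl⟩ : ∃ s, k = t + 2 * s + 2 := ⟨(k - t - 2) / 2, by omega⟩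
        have hA : Mc (t+2*s+2+1) t = gg (s+1) := by
          rw [Mc_eval_pos (by omega) (by omega) (by omega)]; congr 1; omega
        have hC : Sc (t+2*s+2) t = dd s := by
          rw [Sc_eval_pos (by omega) (by omega) (by omega)]; congr 1; omega
        rw [hA, hC, if_neg (by omega : ¬ t = t + 2*s+2)]
        rcases Nat.eq_zero_or_pos (t - 1) with h1 | h1
        · have ht1 : t = 1 := by omega
          subst ht1
          simp only [show (1:ℕ) - 1 = 0 from rfl, Nat.cast_zero, zero_mul]
          have := dd_rec s
          push_cast
          norm_num
          linarith
        · have hB : Mc (t+2*s+2) (t-1) = gg (s+1) := by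
            rw [Mc_eval_pos (by omega) (by omega) (by omega)]; congr 1; omega
          rw [hB]
          have hc2 : ((t - 1 : ℕ) : ℝ) = (t : ℝ) - 1 := by
            push_cast [Nat.cast_sub (by omega : 1 ≤ t)]; ring
          rw [hc2]
          have := dd_rec s
          push_cast at this ⊢
          nlinarith [this]
  · have hA : Mc (k+1) t = 0 := Mc_eval_none (by omega)
    have hC : Sc k t = 0 := Sc_eval_none (by omega)
    have htk : ¬ t = k := by omega
    rcases Nat.eq_zero_or_pos t with rfl | htpos
    · simp [hA, hC, htk]
    · have hB : Mc k (t-1) = 0 := Mc_eval_none (by omega)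
      simp [hA, hB, hC, htk]

section Part2
open Finset

lemma tau_coeff : ∀ n : ℕ, (tau n).coeff n = (-1 : ℂ) ^ (n - 1) ∧
    ∀ m : ℕ, n < m → (tau n).coeff m = 0 := by
  intro n
  induction n using Nat.strong_induction_on with
  | _ n ih =>
    rcases n with _ | _ | n
    · constructor
      · simp [tau]
      · intro m hm
        have : tau 0 = 1 := rfl
        rw [this, Polynomial.coeff_one, if_neg (by omega)]
    · constructor
      · simp [tau]
      · intro m hm
        rw [show tau 1 = Polynomial.X from rfl, Polynomial.coeff_X]
        rw [if_neg (by omega)]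
    · 
      obtain ⟨htop, hgt⟩ := ih (n + 1) (by omega)
      have hne : ((n + 1 : ℕ) : ℂ) ≠ 0 := Nat.cast_ne_zero.mpr (Nat.succ_ne_zero n)
      have hco : ∀ m : ℕ, (tau (n+2)).coeff m =
          ((n + 1 : ℕ) : ℂ)⁻¹ * ((tau (n+1)).coeff (m+1) * (m+1)
            - (if 2 ≤ m then (tau (n+1)).coeff (m-2+1) * (m-2+1) else 0)) := by
        intro m
        have h1 : tau (n+2) = ((n + 1 : ℕ) : ℂ)⁻¹ • Dop (tau (n+1)) := rfl
        rw [h1, Polynomial.coeff_smul, smul_eq_mul]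
        congr 1
        unfold Dop
        rw [sub_mul, one_mul, Polynomial.coeff_sub, Polynomial.coeff_derivative]
        congr 1
        rw [mul_comm (Polynomial.X ^ 2), Polynomial.coeff_mul_X_pow']
        split_ifs with h
        · rw [Polynomial.coeff_derivative]; push_cast [Nat.cast_sub h]; ring
        · rfl
      constructor
      · rw [hco (n+2)]
        rw [hgt (n+2+1) (by omega), if_pos (by omega)]
        have : n + 2 - 2 + 1 = n + 1 := by omega
        rw [this, htop]
        have : (n + 1 : ℕ) - 1 = n := by omega
        rw [this]
        have : (n + 2 : ℕ) - 1 = n + 1 := by omega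
        rw [this]
        have hne2 : (1 + (n:ℂ)) ≠ 0 := by
          intro hcon; apply hne; push_cast; rw [add_comm]; exact hcon
        have hne3 : ((n:ℂ) + 1) ≠ 0 := by
          intro hcon; apply hne; push_cast; exact hcon
        push_cast
        field_simp
        ring
      · intro m hm
        rw [hco m, hgt (m+1) (by omega)]
        rw [if_pos (by omega), hgt (m-2+1) (by omega)]
        simp

lemma tau_coeff_top (n : ℕ) : (tau n).coeff n = (-1 : ℂ) ^ (n - 1) := (tau_coeff n).1

lemma tau_coeff_gt {n m : ℕ} (h : n < m) : (tau n).coeff m = 0 := (tau_coeff n).2 m h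

lemma tau_degree_le (n : ℕ) : (tau n).degree ≤ (n : WithBot ℕ) := by
  rw [Polynomial.degree_le_iff_coeff_zero]
  intro m hm
  exact tau_coeff_gt (by exact_mod_cast hm)

lemma Dop_tau (j : ℕ) : Dop (tau j) = (j : ℂ) • tau (j + 1) := by
  match j with
  | 0 =>
    simp [tau, Dop]
  | (m + 1) =>
    have h1 : tau (m+2) = ((m + 1 : ℕ) : ℂ)⁻¹ • Dop (tau (m+1)) := rfl
    have hne : ((m + 1 : ℕ) : ℂ) ≠ 0 := Nat.cast_ne_zero.mpr (Nat.succ_ne_zero m)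
    rw [h1, smul_smul, mul_inv_cancel₀ hne, one_smul]

lemma rep_unique : ∀ n : ℕ, ∀ a : ℕ → ℂ,
    (∑ k ∈ range (n + 1), a k • tau k) = 0 → ∀ k, k ≤ n → a k = 0 := by
  intro n
  induction n with
  | zero =>
    intro a h k hk
    interval_cases k
    simpa [tau] using h
  | succ n ih =>
    intro a h k hk
    have htop : a (n + 1) = 0 := by
      have := congrArg (fun p => Polynomial.coeff p (n+1)) h
      simp only [Polynomial.finset_sum_coeff, Polynomial.coeff_smul,
        Polynomial.coeff_zero, smul_eq_mul] at this
      rw [Finset.sum_eq_single (n+1)] at this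
      · rw [tau_coeff_top] at this
        have hne : ((-1:ℂ)) ^ (n + 1 - 1) ≠ 0 := pow_ne_zero _ (by norm_num)
        exact (mul_eq_zero.mp this).resolve_right hne
      · intro b hb hbne
        rw [tau_coeff_gt (by simp at hb; omega)]
        ring
      · intro hmem
        simp at hmem
    have hsum : (∑ k ∈ range (n + 1), a k • tau k) = 0 := by
      rw [Finset.sum_range_succ] at h
      rw [htop] at h
      simpa using h
    rcases Nat.lt_or_ge k (n+1) with h1 | h1
    · exact ih a hsum k (by omega)
    · have : k = n + 1 := by omega
      rw [this]; exact htop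

lemma exists_rep : ∀ n : ℕ, ∀ p : Polynomial ℂ, p.degree ≤ (n : WithBot ℕ) →
    ∃ a : ℕ → ℂ, p = ∑ k ∈ range (n + 1), a k • tau k := by
  intro n
  induction n with
  | zero =>
    intro p hp
    refine ⟨fun _ => p.coeff 0, ?_⟩
    have := Polynomial.eq_C_of_degree_le_zero (by exact_mod_cast hp)
    rw [this]
    simp [tau, Polynomial.smul_eq_C_mul]
  | succ n ih =>
    intro p hp
    set c : ℂ := p.coeff (n+1) * (-1)^n with hc
    have hpow : ((-1:ℂ)^n) * ((-1:ℂ)^n) = 1 := by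
      rw [← pow_add]
      exact Even.neg_one_pow ⟨n, by ring⟩
    have hp' : (p - c • tau (n+1)).degree ≤ (n : WithBot ℕ) := by
      rw [Polynomial.degree_le_iff_coeff_zero]
      intro m hm
      have hmn : n < m := by exact_mod_cast hm
      rw [Polynomial.coeff_sub, Polynomial.coeff_smul, smul_eq_mul]
      rcases eq_or_ne m (n+1) with rfl | hne
      · rw [tau_coeff_top]
        have : (n + 1 : ℕ) - 1 = n := by omega
        rw [this, hc]
        rw [mul_assoc, hpow]
        ring
      · have hgt : n + 1 < m := by omega
        rw [tau_coeff_gt hgt]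
        have : p.coeff m = 0 := by
          rw [Polynomial.degree_le_iff_coeff_zero] at hp
          exact hp m (by exact_mod_cast hgt)
        rw [this]; ring
    obtain ⟨a, ha⟩ := ih _ hp'
    refine ⟨Function.update a (n+1) c, ?_⟩
    rw [Finset.sum_range_succ, Function.update_self]
    have : ∑ k ∈ range (n+1), Function.update a (n+1) c k • tau k
        = ∑ k ∈ range (n+1), a k • tau k := by
      apply Finset.sum_congr rfl
      intro k hk
      rw [Function.update_of_ne (by simp at hk; omega)]
    rw [this, ← ha]
    ring

lemma tauNorm_eq (n : ℕ) (p : Polynomial ℂ) (a : ℕ → ℂ)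
    (h : p = ∑ k ∈ range (n + 1), a k • tau k) :
    tauNorm n p = ∑ k ∈ range (n + 1), ‖a k‖ * (Real.pi / 2) ^ (n - k) := by
  have hex : ∃ b : ℕ → ℂ, p = ∑ k ∈ range (n + 1), b k • tau k := ⟨a, h⟩
  unfold tauNorm
  rw [dif_pos hex]
  have hzero : (∑ k ∈ range (n + 1), (hex.choose k - a k) • tau k) = 0 := by
    have : ∑ k ∈ range (n + 1), (hex.choose k - a k) • tau k
        = (∑ k ∈ range (n + 1), hex.choose k • tau k)
          - ∑ k ∈ range (n + 1), a k • tau k := by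
      rw [← Finset.sum_sub_distrib]
      apply Finset.sum_congr rfl
      intro k hk
      rw [sub_smul]
    rw [this, ← hex.choose_spec, ← h, sub_self]
  apply Finset.sum_congr rfl
  intro k hk
  have := rep_unique n _ hzero k (by simp at hk; omega)
  have hk2 : hex.choose k = a k := by
    have := sub_eq_zero.mp this
    exact this
  rw [hk2]

end Part2
section Part3
open Finset

noncomputable def sP (k : ℕ) : Polynomial ℂ := ∑ j ∈ range (k - 1), ((Sc k j : ℝ) : ℂ) • tau j
noncomputable def mP (k : ℕ) : Polynomial ℂ := ∑ j ∈ range k, ((Mc k j : ℝ) : ℂ) • tau j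

lemma Dop_smul (c : ℂ) (p : Polynomial ℂ) : Dop (c • p) = c • Dop p := by
  unfold Dop
  rw [Polynomial.derivative_smul, mul_smul_comm]

lemma Dop_sum {s : Finset ℕ} {f : ℕ → Polynomial ℂ} :
    Dop (∑ j ∈ s, f j) = ∑ j ∈ s, Dop (f j) := by
  unfold Dop
  rw [Polynomial.derivative_sum, Finset.mul_sum]

lemma Dop_sP (k : ℕ) (hk : 2 ≤ k) :
    Dop (sP k) = ∑ t ∈ range k, (((↑(t-1) * Sc k (t - 1) : ℝ)) : ℂ) • tau t := by
  have hk1 : k = (k - 1) + 1 := by omega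
  rw [hk1, Finset.sum_range_succ']
  have h0 : (((↑((0:ℕ)-1) * Sc ((k-1)+1) ((0:ℕ) - 1) : ℝ)) : ℂ) • tau 0 = 0 := by
    norm_num
  rw [h0, add_zero]
  unfold sP
  rw [Dop_sum]
  rw [← hk1]
  apply Finset.sum_congr rfl
  intro j hj
  rw [Dop_smul, Dop_tau]
  simp only [Nat.add_sub_cancel]
  rw [smul_smul]
  congr 1
  push_cast
  ring

lemma Dop_mP (k : ℕ) (hk : 2 ≤ k) :
    Dop (mP k) = ∑ t ∈ range (k + 1), (((↑(t-1) * Mc k (t - 1) : ℝ)) : ℂ) • tau t := by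
  rw [Finset.sum_range_succ']
  have h0 : (((↑((0:ℕ)-1) * Mc k ((0:ℕ) - 1) : ℝ)) : ℂ) • tau 0 = 0 := by
    norm_num
  rw [h0, add_zero]
  unfold mP
  rw [Dop_sum]
  apply Finset.sum_congr rfl
  intro j hj
  rw [Dop_smul, Dop_tau]
  simp only [Nat.add_sub_cancel]
  rw [smul_smul]
  congr 1
  push_cast
  ring

lemma sP_ext (k n : ℕ) (hk : k ≤ n + 2) :
    sP k = ∑ j ∈ range (n + 1), ((Sc k j : ℝ) : ℂ) • tau j := by
  unfold sP
  apply Finset.sum_subset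
  · apply Finset.range_subset_range.mpr; omega
  · intro j hj1 hj2
    simp only [Finset.mem_range] at hj1 hj2
    rw [Sc_zero_of_le (by omega)]
    norm_num

lemma tau_fac : ∀ k, 2 ≤ k → tau k = (1 - X ^ 2) * sP k ∧ (X : Polynomial ℂ) * sP k = mP k := by
  intro k hk
  induction k, hk using Nat.le_induction with
  | base =>
    constructor
    · have hs : sP 2 = 1 := by
        unfold sP
        rw [show (2:ℕ) - 1 = 1 from rfl, Finset.sum_range_one]
        rw [Sc_eval_zero (by omega) (by omega)]
        norm_num [gg_zero, tau]
      rw [hs, mul_one]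
      show ((((1:ℕ)) : ℂ))⁻¹ • Dop (tau 1) = 1 - X ^ 2
      simp [Dop, tau]
    · have hs : sP 2 = 1 := by
        unfold sP
        rw [show (2:ℕ) - 1 = 1 from rfl, Finset.sum_range_one]
        rw [Sc_eval_zero (by omega) (by omega)]
        norm_num [gg_zero, tau]
      have hm : mP 2 = X := by
        unfold mP
        rw [show range 2 = {0, 1} from rfl]
        rw [Finset.sum_insert (by norm_num), Finset.sum_singleton]
        rw [Mc_eval_none (by omega), Mc_eval_pos (by omega) (by omega) (by omega)]
        norm_num [gg_zero]
        rfl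
      rw [hs, hm, mul_one]
  | succ k hk2 ih =>
    obtain ⟨ih1, ih2⟩ := ih
    have hkc : ((k : ℕ) : ℂ) ≠ 0 := Nat.cast_ne_zero.mpr (by omega)
    -- A1 : k • sP (k+1) = Dop (sP k) - 2 • mP k
    have A1 : ((k : ℕ) : ℂ) • sP (k + 1) = Dop (sP k) - (2 : ℂ) • mP k := by
      rw [Dop_sP k hk2]
      unfold sP mP
      rw [show (k + 1) - 1 = k from rfl]
      rw [Finset.smul_sum, Finset.smul_sum, ← Finset.sum_sub_distrib]
      apply Finset.sum_congr rfl
      intro t ht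
      simp only [Finset.mem_range] at ht
      rw [smul_smul, smul_smul, ← sub_smul]
      congr 1
      have h0 := key1 k t hk2 ht
      have h3 : ((k:ℕ):ℂ) * ((Sc (k+1) t : ℝ) : ℂ)
          = (((t-1 : ℕ):ℕ):ℂ) * ((Sc k (t-1) : ℝ):ℂ) - 2 * ((Mc k t : ℝ):ℂ) := by
        exact_mod_cast congrArg (fun x : ℝ => (x : ℂ)) h0
      push_cast
      linear_combination h3
    -- A2 : k • mP (k+1) = Dop (mP k) + tau k - 2 • sP k
    have A2 : ((k : ℕ) : ℂ) • mP (k + 1) = Dop (mP k) + tau k - (2 : ℂ) • sP k := by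
      rw [Dop_mP k hk2]
      have htk : tau k = ∑ t ∈ range (k+1), (if t = k then (1:ℂ) else 0) • tau t := by
        rw [Finset.sum_eq_single k]
        · rw [if_pos rfl, one_smul]
        · intro b _ hb
          rw [if_neg hb, zero_smul]
        · intro h
          exact absurd (Finset.self_mem_range_succ k) h
      rw [htk, sP_ext k k (by omega)]
      unfold mP
      rw [Finset.smul_sum, Finset.smul_sum, ← Finset.sum_add_distrib, ← Finset.sum_sub_distrib]
      apply Finset.sum_congr rfl
      intro t ht
      simp only [Finset.mem_range] at ht
      rw [smul_smul, smul_smul, ← add_smul, ← sub_smul]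
      congr 1
      have h0 := key2 k t hk2 ht
      have h3 : ((k:ℕ):ℂ) * ((Mc (k+1) t : ℝ) : ℂ)
          = (((t-1 : ℕ):ℕ):ℂ) * ((Mc k (t-1) : ℝ):ℂ)
            + ((if t = k then (1:ℝ) else 0 : ℝ):ℂ) - 2 * ((Sc k t : ℝ):ℂ) := by
        exact_mod_cast congrArg (fun x : ℝ => (x : ℂ)) h0
      have hcast : ((if t = k then (1:ℝ) else 0 : ℝ) : ℂ) = (if t = k then (1:ℂ) else 0) := by
        split_ifs <;> norm_num
      rw [hcast] at h3
      push_cast [hcast]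
      linear_combination h3
    -- glue
    have csmul2 : ∀ q : Polynomial ℂ, (2:ℂ) • q = 2 * q := by
      intro q
      rw [show (2:ℂ) = ((1:ℂ)+1) by norm_num, add_smul, one_smul, two_mul]
    have htau_succ : tau (k + 1) = ((k : ℕ) : ℂ)⁻¹ • Dop (tau k) := by
      obtain ⟨m, rfl⟩ : ∃ m, k = m + 1 := ⟨k - 1, by omega⟩
      rfl
    have hder : derivative (1 - X ^ 2 : Polynomial ℂ) = -(2 * X) := by
      simp
      exact one_add_one_eq_two
    have hXm : (X : Polynomial ℂ) * mP k = sP k - tau k := by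
      rw [← ih2, ih1]
      ring
    have e1 : (X : Polynomial ℂ) * Dop (sP k) = Dop (mP k) - tau k := by
      rw [← ih2, ih1]
      unfold Dop
      rw [Polynomial.derivative_mul, Polynomial.derivative_X]
      ring
    have hDtau : Dop (tau k) = (1 - X ^ 2) * (((k : ℕ) : ℂ) • sP (k + 1)) := by
      calc Dop (tau k) = Dop ((1 - X^2) * sP k) := by rw [← ih1]
        _ = (1 - X^2) * (Dop (sP k) - (2:ℂ) • mP k) := by
            unfold Dop
            rw [Polynomial.derivative_mul, hder, csmul2, ← ih2]
            ring
        _ = (1 - X^2) * (((k : ℕ) : ℂ) • sP (k + 1)) := by rw [A1]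
    constructor
    · rw [htau_succ, hDtau, mul_smul_comm, smul_smul, inv_mul_cancel₀ hkc, one_smul]
    · -- X * sP (k+1) = mP (k+1)
      apply smul_right_injective (Polynomial ℂ) hkc
      show ((k : ℕ) : ℂ) • ((X : Polynomial ℂ) * sP (k+1)) = ((k : ℕ) : ℂ) • mP (k+1)
      calc ((k : ℕ) : ℂ) • ((X : Polynomial ℂ) * sP (k+1))
          = X * (((k : ℕ) : ℂ) • sP (k+1)) := (mul_smul_comm _ _ _).symm
        _ = X * (Dop (sP k) - (2:ℂ) • mP k) := by rw [A1]
        _ = X * Dop (sP k) - 2 * (X * mP k) := by rw [csmul2]; ring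
        _ = (Dop (mP k) - tau k) - 2 * (sP k - tau k) := by rw [e1, hXm]
        _ = Dop (mP k) + tau k - (2:ℂ) • sP k := by rw [csmul2]; ring
        _ = ((k : ℕ) : ℂ) • mP (k+1) := A2.symm
end Part3
section Part4
open Finset

lemma pi_sq_le : Real.pi ^ 2 ≤ 10 := by
  nlinarith [Real.pi_lt_d2.le, Real.pi_pos]

lemma dw_bound : ∀ r : ℕ, |dd r| * (Real.pi / 2) ^ (2 * r) ≤ (5/6 : ℝ) ^ r := by
  intro r
  induction r with
  | zero => norm_num [dd]
  | succ n ih =>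
    have hdd : dd (n+1) = (4 / ((2 * n + 3) * (2 * n + 4))) * dd n := rfl
    have hfac : (0:ℝ) < (2 * n + 3) * (2 * n + 4) := by positivity
    have habs : |dd (n+1)| = (4 / ((2 * (n:ℝ) + 3) * (2 * n + 4))) * |dd n| := by
      rw [hdd, abs_mul, abs_of_pos (by positivity)]
    have hkey : (4 / ((2 * (n:ℝ) + 3) * (2 * n + 4))) * (Real.pi / 2) ^ 2 ≤ 5/6 := by
      rw [div_mul_eq_mul_div, div_le_iff₀ (by positivity)]
      have h1 : (Real.pi / 2) ^ 2 = Real.pi ^ 2 / 4 := by ring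
      have h2 : (12 : ℝ) ≤ (2 * (n:ℝ) + 3) * (2 * n + 4) := by nlinarith [Nat.cast_nonneg (α := ℝ) n]
      nlinarith [pi_sq_le]
    calc |dd (n+1)| * (Real.pi / 2) ^ (2 * (n+1))
        = ((4 / ((2 * (n:ℝ) + 3) * (2 * n + 4))) * (Real.pi / 2) ^ 2) * (|dd n| * (Real.pi / 2) ^ (2*n)) := by
          rw [habs]
          rw [show 2 * (n+1) = 2*n + 2 by omega, pow_add]
          ring
      _ ≤ (5/6) * (5/6)^n := by
          apply mul_le_mul hkey ih (by positivity)
          norm_num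
      _ = (5/6 : ℝ)^(n+1) := by ring

lemma r_pow_bound : ∀ r : ℕ, ((r:ℝ) + 1) * (5/6 : ℝ) ^ r ≤ 6 := by
  intro r
  induction r with
  | zero => norm_num
  | succ n ih =>
    have h1 : (5/6 : ℝ)^n ≤ 1 := pow_le_one₀ (by norm_num) (by norm_num)
    have key : ((n:ℝ) + 1 + 1) * (5/6)^(n+1) = (5/6) * (((n:ℝ)+1) * (5/6)^n) + (5/6) * (5/6)^n := by
      push_cast; ring
    push_cast
    rw [key]
    nlinarith

lemma gw_bound : ∀ r : ℕ, |gg r| * (Real.pi / 2) ^ (2 * r) ≤ 6 := by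
  intro r
  have h1 : |gg r| = ((r:ℝ) + 1) * |dd r| := by
    unfold gg
    rw [abs_mul, abs_neg, abs_of_pos (by positivity : (0:ℝ) < (r:ℝ)+1)]
  rw [h1, mul_assoc]
  calc ((r:ℝ)+1) * (|dd r| * (Real.pi/2)^(2*r)) ≤ ((r:ℝ)+1) * (5/6)^r := by
        apply mul_le_mul_of_nonneg_left (dw_bound r) (by positivity)
    _ ≤ 6 := r_pow_bound r

lemma half_pow_bound : ∀ i : ℕ, (5/6 : ℝ) ^ (i / 2) ≤ 2 * (11/12 : ℝ) ^ i := by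
  intro i
  rcases Nat.eq_zero_or_pos i with rfl | hi
  · norm_num
  · have h1 : (5/6 : ℝ) ^ (i/2) ≤ ((11/12 : ℝ)^2) ^ (i/2) := by
      apply pow_le_pow_left₀ (by norm_num)
      norm_num
    have h2 : ((11/12 : ℝ)^2) ^ (i/2) = (11/12 : ℝ) ^ (2 * (i/2)) := by
      rw [← pow_mul]
    have h3 : (11/12 : ℝ) ^ (2 * (i/2)) ≤ (11/12 : ℝ) ^ (i - 1) := by
      apply pow_le_pow_of_le_one (by norm_num) (by norm_num)
      omega
    have h4 : (11/12 : ℝ) ^ (i - 1) ≤ 2 * (11/12) ^ i := by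
      obtain ⟨m, rfl⟩ : ∃ m, i = m + 1 := ⟨i - 1, by omega⟩
      have hm : m + 1 - 1 = m := by omega
      rw [hm, pow_succ]
      have h5 : (0:ℝ) < (11/12 : ℝ)^m := by positivity
      nlinarith
    calc (5/6 : ℝ) ^ (i/2) ≤ ((11/12 : ℝ)^2) ^ (i/2) := h1
      _ = (11/12 : ℝ) ^ (2 * (i/2)) := h2
      _ ≤ (11/12 : ℝ) ^ (i - 1) := h3
      _ ≤ 2 * (11/12)^i := h4

lemma geo_bound : ∀ N : ℕ, ∑ i ∈ range N, (11/12 : ℝ) ^ i ≤ 12 - 12 * (11/12) ^ N := by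
  intro N
  induction N with
  | zero => norm_num
  | succ n ih =>
    rw [Finset.sum_range_succ]
    have : (12 : ℝ) - 12 * (11/12)^(n+1) = (12 - 12 * (11/12)^n) + (11/12)^n := by ring
    rw [this]
    linarith

/-- Per-τ_k weighted bound. -/
lemma Sc_weighted_bound (k : ℕ) (hk : 2 ≤ k) :
    ∑ j ∈ range (k - 1), |Sc k j| * (Real.pi / 2) ^ (k - 2 - j) ≤ 30 := by
  have hk1 : k - 1 = (k - 2) + 1 := by omega
  rw [hk1, Finset.sum_range_succ']
  have hzero : |Sc k 0| * (Real.pi / 2) ^ (k - 2 - 0) ≤ 6 := by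
    by_cases hc : k % 2 = 0
    · rw [Sc_eval_zero hk hc]
      obtain ⟨R, hR⟩ : ∃ R, k - 2 = 2 * R := ⟨(k-2)/2, by omega⟩
      have : (k - 2) / 2 = R := by omega
      rw [this]
      rw [show k - 2 - 0 = 2 * R by omega]
      exact gw_bound R
    · rw [Sc_eval_none (by omega)]
      norm_num
  have hterm : ∀ j, j < k - 2 →
      |Sc k (j+1)| * (Real.pi / 2) ^ (k - 2 - (j+1)) ≤ 2 * (11/12 : ℝ) ^ ((k-2) - 1 - j) := by
    intro j hj
    have he : k - 2 - (j + 1) = (k - 2) - 1 - j := by omega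
    rw [he]
    by_cases hc : (j + 1) + 2 ≤ k ∧ (k - (j+1)) % 2 = 0
    · rw [Sc_eval_pos hc.1 hc.2 (by omega)]
      obtain ⟨r, hr⟩ : ∃ r, k - 2 - (j+1) = 2 * r := ⟨(k-2-(j+1))/2, by omega⟩
      have h2 : (k - 2 - (j+1)) / 2 = r := by omega
      rw [h2]
      have h3 : (k - 2) - 1 - j = 2 * r := by omega
      rw [h3]
      calc |dd r| * (Real.pi/2) ^ (2*r) ≤ (5/6 : ℝ)^r := dw_bound r
        _ = (5/6 : ℝ) ^ ((2 * r)/2) := by congr 1; omega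
        _ ≤ 2 * (11/12 : ℝ) ^ (2*r) := half_pow_bound (2*r)
    · rw [Sc_eval_none hc]
      norm_num
  calc (∑ j ∈ range (k-2), |Sc k (j+1)| * (Real.pi / 2) ^ (k - 2 - (j+1)))
        + |Sc k 0| * (Real.pi / 2) ^ (k - 2 - 0)
      ≤ (∑ j ∈ range (k-2), 2 * (11/12 : ℝ) ^ ((k-2) - 1 - j)) + 6 := by
        apply add_le_add _ hzero
        apply Finset.sum_le_sum
        intro j hj
        exact hterm j (Finset.mem_range.mp hj)
    _ = 2 * (∑ j ∈ range (k-2), (11/12 : ℝ) ^ j) + 6 := by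
        rw [Finset.sum_range_reflect (fun j => 2 * (11/12 : ℝ)^j) (k-2), Finset.mul_sum]
    _ ≤ 2 * (12 - 12 * (11/12)^(k-2)) + 6 := by
        have := geo_bound (k-2)
        nlinarith
    _ ≤ 30 := by
        have : (0:ℝ) < (11/12 : ℝ)^(k-2) := by positivity
        nlinarith

end Part4
section Part5
open Finset

lemma tau_eval_pm (k : ℕ) (hk : 2 ≤ k) :
    (tau k).eval 1 = 0 ∧ (tau k).eval (-1) = 0 := by
  have h := (tau_fac k hk).1
  constructor <;> rw [h, Polynomial.eval_mul] <;> simp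

theorem stmt_4 :
    ∃ M₃ > (0 : ℝ), ∀ n : ℕ, 2 ≤ n → ∀ p : Polynomial ℂ, p.degree ≤ (n : WithBot ℕ) →
      p.eval 1 = 0 → p.eval (-1) = 0 →
      ∃ q : Polynomial ℂ, p = (1 - X ^ 2) * q ∧ q.degree ≤ ((n - 2 : ℕ) : WithBot ℕ) ∧
        tauNorm (n - 2) q ≤ M₃ * tauNorm n p := by
  refine ⟨100, by norm_num, ?_⟩
  intro n hn p hdeg hev1 hevm1
  obtain ⟨a, ha⟩ := exists_rep n p hdeg
  have heval : ∀ x : ℂ, p.eval x = ∑ k ∈ range (n+1), a k * (tau k).eval x := by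
    intro x
    rw [ha, Polynomial.eval_finset_sum]
    apply Finset.sum_congr rfl
    intro k _
    rw [Polynomial.eval_smul, smul_eq_mul]
  have hsplit : ∀ f : ℕ → ℂ, (∀ j, f (j+2) = 0) →
      ∑ k ∈ range (n+1), f k = f 0 + f 1 := by
    intro f hf
    have h1 : n + 1 = (n - 1) + 1 + 1 := by omega
    rw [h1, Finset.sum_range_succ', Finset.sum_range_succ']
    rw [Finset.sum_eq_zero (fun i _ => hf i)]
    ring
  have hs1 : a 0 + a 1 = 0 := by
    have h2 := heval 1
    rw [hev1] at h2
    have h3 : ∑ k ∈ range (n+1), a k * (tau k).eval 1 = a 0 + a 1 := by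
      rw [hsplit (fun k => a k * (tau k).eval 1)
        (fun j => by
          show a (j+2) * (tau (j+2)).eval 1 = 0
          rw [(tau_eval_pm (j+2) (by omega)).1, mul_zero])]
      have e0 : (tau 0).eval 1 = 1 := by simp [tau]
      have e1 : (tau 1).eval 1 = 1 := by simp [tau]
      rw [e0, e1, mul_one, mul_one]
    rw [h3] at h2
    exact h2.symm
  have hs2 : a 0 - a 1 = 0 := by
    have h2 := heval (-1)
    rw [hevm1] at h2
    have h3 : ∑ k ∈ range (n+1), a k * (tau k).eval (-1) = a 0 - a 1 := by
      rw [hsplit (fun k => a k * (tau k).eval (-1))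
        (fun j => by
          show a (j+2) * (tau (j+2)).eval (-1) = 0
          rw [(tau_eval_pm (j+2) (by omega)).2, mul_zero])]
      have e0 : (tau 0).eval (-1) = 1 := by simp [tau]
      have e1 : (tau 1).eval (-1) = -1 := by simp [tau]
      rw [e0, e1, mul_one]
      ring
    rw [h3] at h2
    linear_combination -h2
  have ha0 : a 0 = 0 := by linear_combination (hs1 + hs2) / 2
  have ha1 : a 1 = 0 := by linear_combination (hs1 - hs2) / 2
  set bb : ℕ → ℂ := fun j => ∑ k ∈ range (n+1), a k * ((Sc k j : ℝ) : ℂ) with hbb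
  set q : Polynomial ℂ := ∑ j ∈ range (n-1), bb j • tau j with hqdef
  have hn21 : n - 2 + 1 = n - 1 := by omega
  have hfac : p = (1 - X ^ 2) * q := by
    have step1 : p = ∑ k ∈ range (n+1), a k • ((1 - X^2) * sP k) := by
      rw [ha]
      apply Finset.sum_congr rfl
      intro k _
      match k with
      | 0 => rw [ha0]; simp
      | 1 => rw [ha1]; simp
      | (m+2) => rw [(tau_fac (m+2) (by omega)).1]
    have step2 : ∑ k ∈ range (n+1), a k • ((1 - X^2) * sP k)
        = (1 - X^2) * ∑ k ∈ range (n+1), a k • sP k := by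
      rw [Finset.mul_sum]
      apply Finset.sum_congr rfl
      intro k _
      rw [mul_smul_comm]
    have step3 : ∑ k ∈ range (n+1), a k • sP k = q := by
      calc ∑ k ∈ range (n+1), a k • sP k
          = ∑ k ∈ range (n+1), ∑ j ∈ range (n-1), a k • (((Sc k j : ℝ):ℂ) • tau j) := by
            apply Finset.sum_congr rfl
            intro k hk
            have hkn : k ≤ n - 2 + 2 := by rw [Finset.mem_range] at hk; omega
            rw [sP_ext k (n-2) hkn, hn21, Finset.smul_sum]
        _ = ∑ j ∈ range (n-1), ∑ k ∈ range (n+1), a k • (((Sc k j : ℝ):ℂ) • tau j) :=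
            Finset.sum_comm
        _ = q := by
            apply Finset.sum_congr rfl
            intro j _
            have hinner : ∑ k ∈ range (n+1), a k • (((Sc k j : ℝ):ℂ) • tau j)
                = ∑ k ∈ range (n+1), (a k * ((Sc k j : ℝ):ℂ)) • tau j :=
              Finset.sum_congr rfl fun k _ => smul_smul _ _ _
            rw [hinner, ← Finset.sum_smul]
    rw [step1, step2, step3]
  have hdq : q.degree ≤ ((n - 2 : ℕ) : WithBot ℕ) := by
    apply le_trans (Polynomial.degree_sum_le _ _)
    apply Finset.sup_le
    intro j hj
    apply le_trans (Polynomial.degree_smul_le _ _)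
    apply le_trans (tau_degree_le j)
    have : j ≤ n - 2 := by simp at hj; omega
    exact_mod_cast this
  refine ⟨q, hfac, hdq, ?_⟩
  have hnp : tauNorm n p = ∑ k ∈ range (n+1), ‖a k‖ * (Real.pi/2)^(n-k) :=
    tauNorm_eq n p a ha
  have hq2 : q = ∑ j ∈ range ((n-2) + 1), bb j • tau j := by
    rw [hn21]
  have hnq : tauNorm (n-2) q
      = ∑ j ∈ range (n-1), ‖bb j‖ * (Real.pi/2)^(n-2-j) := by
    rw [tauNorm_eq (n-2) q bb hq2, hn21]
  have hperk : ∀ k ∈ range (n+1),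
      ∑ j ∈ range (n-1), |Sc k j| * (Real.pi/2)^(n-2-j) ≤ 100 * (Real.pi/2)^(n-k) := by
    intro k hk
    simp only [Finset.mem_range] at hk
    rcases le_or_gt 2 k with h2 | h2
    · have hsub : ∑ j ∈ range (n-1), |Sc k j| * (Real.pi/2)^(n-2-j)
          = ∑ j ∈ range (k-1), |Sc k j| * (Real.pi/2)^(n-2-j) := by
        symm
        apply Finset.sum_subset (Finset.range_subset_range.mpr (by omega))
        intro j hj1 hj2
        simp only [Finset.mem_range] at hj1 hj2
        rw [Sc_zero_of_le (by omega)]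
        norm_num
      rw [hsub]
      have hfac2 : ∀ j ∈ range (k-1), |Sc k j| * (Real.pi/2)^(n-2-j)
          = (Real.pi/2)^(n-k) * (|Sc k j| * (Real.pi/2)^(k-2-j)) := by
        intro j hj
        simp only [Finset.mem_range] at hj
        rw [show n-2-j = (n-k) + (k-2-j) by omega, pow_add]
        ring
      rw [Finset.sum_congr rfl hfac2, ← Finset.mul_sum]
      have hw := Sc_weighted_bound k h2
      have hpow : (0:ℝ) < (Real.pi/2)^(n-k) := by positivity
      nlinarith
    · have hzero : ∀ j ∈ range (n-1), |Sc k j| * (Real.pi/2)^(n-2-j) = 0 := by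
        intro j _
        rw [Sc_zero_of_le (by omega)]
        norm_num
      rw [Finset.sum_eq_zero hzero]
      positivity
  calc tauNorm (n-2) q
      = ∑ j ∈ range (n-1), ‖bb j‖ * (Real.pi/2)^(n-2-j) := hnq
    _ ≤ ∑ j ∈ range (n-1), (∑ k ∈ range (n+1), ‖a k‖ * |Sc k j|)
          * (Real.pi/2)^(n-2-j) := by
        apply Finset.sum_le_sum
        intro j _
        apply mul_le_mul_of_nonneg_right _ (by positivity)
        calc ‖bb j‖ ≤ ∑ k ∈ range (n+1), ‖a k * ((Sc k j : ℝ):ℂ)‖ :=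
              norm_sum_le _ _
          _ = ∑ k ∈ range (n+1), ‖a k‖ * |Sc k j| := by
              apply Finset.sum_congr rfl
              intro k _
              rw [norm_mul, Complex.norm_real, Real.norm_eq_abs]
    _ = ∑ k ∈ range (n+1), ‖a k‖
          * ∑ j ∈ range (n-1), |Sc k j| * (Real.pi/2)^(n-2-j) := by
        have h1 : ∀ j ∈ range (n-1),
            (∑ k ∈ range (n+1), ‖a k‖ * |Sc k j|) * (Real.pi/2) ^ (n-2-j)
            = ∑ k ∈ range (n+1), ‖a k‖ * (|Sc k j| * (Real.pi/2) ^ (n-2-j)) := by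
          intro j _
          rw [Finset.sum_mul]
          exact Finset.sum_congr rfl fun k _ => by ring
        rw [Finset.sum_congr rfl h1, Finset.sum_comm]
        exact Finset.sum_congr rfl fun k _ => by rw [Finset.mul_sum]
    _ ≤ ∑ k ∈ range (n+1), ‖a k‖ * (100 * (Real.pi/2)^(n-k)) := by
        apply Finset.sum_le_sum
        intro k hk
        exact mul_le_mul_of_nonneg_left (hperk k hk) (by positivity)
    _ = 100 * tauNorm n p := by
        rw [hnp, Finset.mul_sum]
        apply Finset.sum_congr rfl
        intro k _
        ring
end Part5
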